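/- If a graph G on n vertices contains a twin pair (two true twins or two false twins), then for every 0 ≤ k ≤ n, the number of non-forcing k-subsets satisfies z'(G;k) ≥ C(n−2, k), and hence z'(G;k) ≥ C(n−k−1, k) = z'(P_n;k); that is, G is path-extremal. -/

import Mathlib

open SimpleGraph

/-- The zero forcing closure: `ZFClosure G S v` means vertex `v` eventually becomes blue
when starting from the blue set `S` and repeatedly applying the color-change rule:
a blue vertex with exactly one white neighbor forces that neighbor to become blue. -/
inductive ZFClosure {V : Type*} (G : SimpleGraph V) (S : Set V) : V → Prop
  | init {v : V} : v ∈ S → ZFClosure G S v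
  | force {u w : V} : ZFClosure G S u → G.Adj u w →
      (∀ x, G.Adj u x → x ≠ w → ZFClosure G S x) → ZFClosure G S w

/-- `S` is a zero forcing set of `G` if its closure is all of `V`. -/
def IsZeroForcing {V : Type*} (G : SimpleGraph V) (S : Set V) : Prop :=
  ∀ v, ZFClosure G S v

/-- `z(G;k)`: the number of zero forcing sets of size `k`. -/
noncomputable def zfCount {V : Type*} (G : SimpleGraph V) [Fintype V] (k : ℕ) : ℕ :=
  Nat.card {S : Finset V // S.card = k ∧ IsZeroForcing G ↑S}

/-- `z'(G;k)`: the number of non-forcing `k`-subsets. -/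
noncomputable def nfCount {V : Type*} (G : SimpleGraph V) [Fintype V] (k : ℕ) : ℕ :=
  Nat.card {S : Finset V // S.card = k ∧ ¬ IsZeroForcing G ↑S}

/-- A fort: every vertex outside `F` has `0` or at least `2` neighbors in `F`. -/
def IsFort {V : Type*} (G : SimpleGraph V) (F : Set V) : Prop :=
  ∀ v ∉ F, (∀ w ∈ F, ¬ G.Adj v w) ∨
    ∃ w₁ ∈ F, ∃ w₂ ∈ F, w₁ ≠ w₂ ∧ G.Adj v w₁ ∧ G.Adj v w₂

/-- True twins: adjacent with the same neighbors outside the pair. -/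
def TrueTwins {V : Type*} (G : SimpleGraph V) (u v : V) : Prop :=
  G.Adj u v ∧ ∀ w, w ≠ u → w ≠ v → (G.Adj u w ↔ G.Adj v w)

/-- False twins: distinct, nonadjacent, with the same open neighborhoods. -/
def FalseTwins {V : Type*} (G : SimpleGraph V) (u v : V) : Prop :=
  u ≠ v ∧ ¬ G.Adj u v ∧ ∀ w, G.Adj u w ↔ G.Adj v w

/-- A twin pair: true twins or false twins. -/
def TwinPair {V : Type*} (G : SimpleGraph V) (u v : V) : Prop :=
  TrueTwins G u v ∨ FalseTwins G u v

/-- `G` is path-extremal: the path on the same number of vertices has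
coefficientwise at least as many zero forcing sets of every size. -/
noncomputable def PathExtremal {V : Type*} (G : SimpleGraph V) [Fintype V] : Prop :=
  ∀ k : ℕ, zfCount G k ≤ zfCount (SimpleGraph.pathGraph (Fintype.card V)) k


open Finset

def NoConsec (S : Finset ℕ) : Prop := ∀ a ∈ S, a + 1 ∉ S

instance : DecidablePred NoConsec := fun S => by unfold NoConsec; infer_instance

lemma count_noconsec (m k : ℕ) :
    (((range m).powersetCard k).filter NoConsec).card ≤ Nat.choose (m + 1 - k) k := by
  classical
  induction m using Nat.strong_induction_on generalizing k with
  | _ m IH =>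
  rcases Nat.eq_zero_or_pos k with hk0 | hk1
  · subst hk0
    calc (((range m).powersetCard 0).filter NoConsec).card
        ≤ ((range m).powersetCard 0).card := card_filter_le _ _
      _ ≤ 1 := by simp
      _ ≤ _ := by simp
  rcases lt_or_ge m k with hmk | hkm
  · have h0 : (range m).powersetCard k = ∅ := by
      rw [Finset.powersetCard_eq_empty]; simpa using hmk
    rw [h0]; simp
  -- now 1 ≤ k ≤ m
  have hm1 : 1 ≤ m := le_trans hk1 hkm
  rcases Nat.lt_or_ge m 2 with hm2 | hm2
  · -- m = 1, k = 1
    have hm : m = 1 := by omega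
    have hk : k = 1 := by omega
    subst hm; subst hk
    calc (((range 1).powersetCard 1).filter NoConsec).card
        ≤ ((range 1).powersetCard 1).card := card_filter_le _ _
      _ ≤ 1 := by rw [Finset.card_powersetCard]; simp
      _ ≤ _ := by norm_num
  set A := ((range m).powersetCard k).filter NoConsec with hA
  have hsplit : (A.filter (fun S => m - 1 ∉ S)).card + (A.filter (fun S => m - 1 ∈ S)).card = A.card := by
    simpa using Finset.card_filter_add_card_filter_not (s := A) (p := fun S => m - 1 ∉ S)
  have h1 : (A.filter (fun S => m - 1 ∉ S)).card ≤ Nat.choose (m - k) k := by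
    have hsub : A.filter (fun S => m - 1 ∉ S) ⊆ ((range (m-1)).powersetCard k).filter NoConsec := by
      intro S hS
      simp only [hA, mem_filter, mem_powersetCard] at hS ⊢
      obtain ⟨⟨⟨hsub, hcard⟩, hnc⟩, hnot⟩ := hS
      refine ⟨⟨?_, hcard⟩, hnc⟩
      intro x hx
      have hx1 : x < m := by simpa using hsub hx
      have hx2 : x ≠ m - 1 := fun h => hnot (h ▸ hx)
      simp only [mem_range]; omega
    have := le_trans (Finset.card_le_card hsub) (IH (m-1) (by omega) k)
    rwa [show m - 1 + 1 - k = m - k from by omega] at this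
  have h2 : (A.filter (fun S => m - 1 ∈ S)).card ≤ Nat.choose (m - k) (k - 1) := by
    have hle : (A.filter (fun S => m - 1 ∈ S)).card ≤ (((range (m-2)).powersetCard (k-1)).filter NoConsec).card := by
      refine Finset.card_le_card_of_injOn (fun S => S.erase (m-1)) ?_ ?_
      · intro S hS
        simp only [hA, Finset.mem_coe, mem_filter, mem_powersetCard] at hS ⊢
        obtain ⟨⟨⟨hsub, hcard⟩, hnc⟩, hmem⟩ := hS
        refine ⟨⟨?_, by rw [card_erase_of_mem hmem, hcard]⟩, ?_⟩
        · intro x hx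
          have hxS := mem_of_mem_erase hx
          have hxne : x ≠ m - 1 := ne_of_mem_erase hx
          have hxlt : x < m := by simpa using hsub hxS
          have hm2 : 2 ≤ m := by omega
          have hxne2 : x ≠ m - 2 := by
            intro h
            exact hnc x hxS (by rw [h, show m - 2 + 1 = m - 1 by omega]; exact hmem)
          simp only [mem_range]; omega
        · intro a ha hcon
          exact hnc a (mem_of_mem_erase ha) (mem_of_mem_erase hcon)
      · intro S₁ h₁ S₂ h₂ heq
        simp only [hA, coe_filter, Set.mem_setOf_eq] at h₁ h₂
        dsimp only at heq
        rw [← Finset.insert_erase h₁.2, ← Finset.insert_erase h₂.2, heq]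
    have := le_trans hle (IH (m-2) (by omega) (k-1))
    rwa [show m - 2 + 1 - (k-1) = m - k from by omega] at this
  calc A.card = _ + _ := hsplit.symm
    _ ≤ Nat.choose (m - k) k + Nat.choose (m - k) (k - 1) := Nat.add_le_add h1 h2
    _ = Nat.choose (m + 1 - k) k := by
        obtain ⟨k', rfl⟩ : ∃ k', k = k' + 1 := ⟨k - 1, by omega⟩
        rw [show m + 1 - (k'+1) = (m - (k'+1)) + 1 from by omega, Nat.choose_succ_succ,
          show k' + 1 - 1 = k' from rfl]
        exact Nat.add_comm _ _

section Path
variable {n : ℕ} {S : Set (Fin n)}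

lemma path_up (i : ℕ) (hi : i + 1 < n)
    (h0 : ZFClosure (pathGraph n) S ⟨i, by omega⟩)
    (h1 : ZFClosure (pathGraph n) S ⟨i + 1, hi⟩) :
    ∀ t, ∀ (ht : i + t < n), ZFClosure (pathGraph n) S ⟨i + t, ht⟩ := by
  intro t
  induction t using Nat.strong_induction_on with
  | _ t IH =>
  rcases t with _ | t
  · intro ht; exact h0
  rcases t with _ | t
  · intro ht; exact h1
  intro ht
  refine ZFClosure.force (u := ⟨i + t + 1, by omega⟩) (IH (t+1) (by omega) (by omega)) ?_ ?_
  · rw [pathGraph_adj]; left; simp only [Fin.val_mk]; omega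
  · intro x hadj hne
    rw [pathGraph_adj] at hadj
    rcases hadj with h | h
    · exfalso; apply hne; apply Fin.ext; simp only [Fin.val_mk] at h ⊢; omega
    · simp only [Fin.val_mk] at h
      have hx : x = ⟨i + t, by omega⟩ := Fin.ext (by simp only [Fin.val_mk]; omega)
      rw [hx]; exact IH t (by omega) (by omega)

lemma path_down (i : ℕ) (hi : i + 1 < n)
    (h0 : ZFClosure (pathGraph n) S ⟨i, by omega⟩)
    (h1 : ZFClosure (pathGraph n) S ⟨i + 1, hi⟩) :
    ∀ t, t ≤ i → ZFClosure (pathGraph n) S ⟨i - t, by omega⟩ := by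
  intro t
  induction t using Nat.strong_induction_on with
  | _ t IH =>
  rcases t with _ | t
  · intro _; exact h0
  intro ht
  refine ZFClosure.force (u := ⟨i - t, by omega⟩) (IH t (by omega) (by omega)) ?_ ?_
  · rw [pathGraph_adj]; right; simp only [Fin.val_mk]; omega
  · intro x hadj hne
    rw [pathGraph_adj] at hadj
    rcases hadj with h | h
    · simp only [Fin.val_mk] at h
      rcases Nat.eq_zero_or_pos t with rfl | htpos
      · have hx : x = ⟨i + 1, hi⟩ := Fin.ext (by simp only [Fin.val_mk]; omega)
        rw [hx]; exact h1
      · have hx : x = ⟨i - (t-1), by omega⟩ := Fin.ext (by simp only [Fin.val_mk]; omega)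
        rw [hx]; exact IH (t-1) (by omega) (by omega)
    · exfalso; apply hne; apply Fin.ext; simp only [Fin.val_mk] at h ⊢; omega

lemma path_pair (i : ℕ) (hi : i + 1 < n)
    (h0 : ZFClosure (pathGraph n) S ⟨i, by omega⟩)
    (h1 : ZFClosure (pathGraph n) S ⟨i + 1, hi⟩) :
    IsZeroForcing (pathGraph n) S := by
  intro w
  rcases le_or_gt i w.val with h | h
  · have hw : w = ⟨i + (w.val - i), by omega⟩ := Fin.ext (by simp; omega)
    rw [hw]; exact path_up i hi h0 h1 _ _
  · have hw : w = ⟨i - (i - w.val), by omega⟩ := Fin.ext (by simp; omega)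
    rw [hw]; exact path_down i hi h0 h1 _ (by omega)

lemma path_zero (hn : 1 ≤ n) (hS : (⟨0, by omega⟩ : Fin n) ∈ S) :
    IsZeroForcing (pathGraph n) S := by
  rcases Nat.lt_or_ge n 2 with hn2 | hn2
  · intro w
    have : w = ⟨0, by omega⟩ := Fin.ext (by omega)
    rw [this]; exact ZFClosure.init hS
  · have h1 : ZFClosure (pathGraph n) S ⟨1, by omega⟩ := by
      refine ZFClosure.force (u := ⟨0, by omega⟩) (ZFClosure.init hS) ?_ ?_
      · rw [pathGraph_adj]; left; simp
      · intro x hadj hne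
        rw [pathGraph_adj] at hadj
        exfalso
        rcases hadj with h | h
        · exact hne (Fin.ext (by simp only [Fin.val_mk] at h ⊢; omega))
        · simp only [Fin.val_mk] at h; omega
    exact path_pair 0 (by omega) (ZFClosure.init hS) h1

lemma path_last (hn : 1 ≤ n) (hS : (⟨n - 1, by omega⟩ : Fin n) ∈ S) :
    IsZeroForcing (pathGraph n) S := by
  rcases Nat.lt_or_ge n 2 with hn2 | hn2
  · intro w
    have : w = ⟨n - 1, by omega⟩ := Fin.ext (by omega)
    rw [this]; exact ZFClosure.init hS
  · have h0 : ZFClosure (pathGraph n) S ⟨n - 2, by omega⟩ := by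
      refine ZFClosure.force (u := ⟨n - 1, by omega⟩) (ZFClosure.init hS) ?_ ?_
      · rw [pathGraph_adj]; right; simp only [Fin.val_mk]; omega
      · intro x hadj hne
        rw [pathGraph_adj] at hadj
        exfalso
        rcases hadj with h | h
        · simp only [Fin.val_mk] at h; omega
        · exact hne (Fin.ext (by simp only [Fin.val_mk] at h ⊢; omega))
    have h1 : ZFClosure (pathGraph n) S ⟨n - 2 + 1, by omega⟩ := by
      have : (⟨n - 2 + 1, by omega⟩ : Fin n) = ⟨n - 1, by omega⟩ := Fin.ext (by simp; omega)
      rw [this]; exact ZFClosure.init hS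
    exact path_pair (n-2) (by omega) h0 h1

lemma path_consec {s t : Fin n} (hs : s ∈ S) (ht : t ∈ S) (h : t.val = s.val + 1) :
    IsZeroForcing (pathGraph n) S := by
  have h0 : ZFClosure (pathGraph n) S ⟨s.val, s.isLt⟩ := by
    have : (⟨s.val, s.isLt⟩ : Fin n) = s := Fin.ext rfl
    rw [this]; exact ZFClosure.init hs
  have h1 : ZFClosure (pathGraph n) S ⟨s.val + 1, by omega⟩ := by
    have : (⟨s.val + 1, by omega⟩ : Fin n) = t := Fin.ext (by simp [h])
    rw [this]; exact ZFClosure.init ht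
  exact path_pair s.val (by omega) h0 h1

end Path


lemma twin_closed {V : Type*} (G : SimpleGraph V) (u v : V) (h : TwinPair G u v)
    (S : Set V) (hu : u ∉ S) (hv : v ∉ S) :
    ∀ w, ZFClosure G S w → w ≠ u ∧ w ≠ v := by
  have hne : u ≠ v := by
    rcases h with ⟨hadj, _⟩ | ⟨hne, _, _⟩
    · exact hadj.ne
    · exact hne
  have hiff : ∀ w, w ≠ u → w ≠ v → (G.Adj u w ↔ G.Adj v w) := by
    rcases h with ⟨_, h2⟩ | ⟨_, _, h2⟩
    · exact h2
    · exact fun w _ _ => h2 w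
  intro w hw
  induction hw with
  | init hmem => exact ⟨fun e => hu (e ▸ hmem), fun e => hv (e ▸ hmem)⟩
  | @force x w hx hadj hall ihx ihall =>
    obtain ⟨hxu, hxv⟩ := ihx
    constructor
    · rintro rfl
      have hvx : G.Adj x v := ((hiff x hxu hxv).mp hadj.symm).symm
      exact ((ihall v hvx hne.symm).2) rfl
    · rintro rfl
      have hux : G.Adj x u := ((hiff x hxu hxv).mpr hadj.symm).symm
      exact ((ihall u hux hne).1) rfl

lemma nfCount_eq {V : Type*} [Fintype V] (G : SimpleGraph V) (k : ℕ)
    [DecidableEq V] [DecidablePred (fun S : Finset V => S.card = k ∧ ¬ IsZeroForcing G ↑S)] :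
    nfCount G k = (Finset.univ.filter
      (fun S : Finset V => S.card = k ∧ ¬ IsZeroForcing G ↑S)).card := by
  rw [nfCount, Nat.card_eq_fintype_card, Fintype.card_subtype]

lemma zfCount_eq {V : Type*} [Fintype V] (G : SimpleGraph V) (k : ℕ)
    [DecidableEq V] [DecidablePred (fun S : Finset V => S.card = k ∧ IsZeroForcing G ↑S)] :
    zfCount G k = (Finset.univ.filter
      (fun S : Finset V => S.card = k ∧ IsZeroForcing G ↑S)).card := by
  rw [zfCount, Nat.card_eq_fintype_card, Fintype.card_subtype]

lemma sum_counts {V : Type*} [Fintype V] (G : SimpleGraph V) (k : ℕ) :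
    zfCount G k + nfCount G k = (Fintype.card V).choose k := by
  classical
  rw [zfCount_eq, nfCount_eq]
  have hsplit := Finset.card_filter_add_card_filter_not
    (s := Finset.univ.filter (fun S : Finset V => S.card = k))
    (p := fun S : Finset V => IsZeroForcing G ↑S)
  rw [Finset.filter_filter, Finset.filter_filter] at hsplit
  have hcard : (Finset.univ.filter (fun S : Finset V => S.card = k)).card
      = (Fintype.card V).choose k := by
    have : Finset.univ.filter (fun S : Finset V => S.card = k)
        = (Finset.univ : Finset V).powersetCard k := by
      ext S; simp [Finset.mem_powersetCard]
    rw [this, Finset.card_powersetCard, Finset.card_univ]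
  rw [← hcard, ← hsplit]

lemma path_nf_bound (n k : ℕ) (hn : 2 ≤ n) :
    nfCount (SimpleGraph.pathGraph n) k ≤ Nat.choose (n - k - 1) k := by
  classical
  rw [nfCount_eq]
  have key : ∀ S : Finset (Fin n), ¬ IsZeroForcing (SimpleGraph.pathGraph n) ↑S →
      ∀ s ∈ S, s.val ≠ 0 ∧ s.val ≠ n - 1 ∧ ∀ t ∈ S, t.val ≠ s.val + 1 := by
    intro S hnf s hs
    refine ⟨?_, ?_, ?_⟩
    · intro h0
      apply hnf
      apply path_zero (by omega)
      have : (⟨0, by omega⟩ : Fin n) = s := Fin.ext (by simp [h0])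
      rw [this]; exact hs
    · intro hlast
      apply hnf
      apply path_last (by omega)
      have : (⟨n - 1, by omega⟩ : Fin n) = s := Fin.ext (by simp [hlast])
      rw [this]; exact hs
    · intro t ht hcon
      exact hnf (path_consec (S := (↑S : Set (Fin n))) hs ht hcon)
  have hle : (Finset.univ.filter
        (fun S : Finset (Fin n) => S.card = k ∧ ¬ IsZeroForcing (SimpleGraph.pathGraph n) ↑S)).card
      ≤ (((range (n-2)).powersetCard k).filter NoConsec).card := by
    refine Finset.card_le_card_of_injOn (fun S => S.image (fun s => s.val - 1)) ?_ ?_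
    · intro S hS
      simp only [Finset.mem_coe, Finset.mem_filter, Finset.mem_univ, true_and] at hS
      obtain ⟨hcard, hnf⟩ := hS
      have hkey := key S hnf
      simp only [Finset.mem_coe, Finset.mem_filter, Finset.mem_powersetCard]
      refine ⟨⟨?_, ?_⟩, ?_⟩
      · intro a ha
        simp only [Finset.mem_image] at ha
        obtain ⟨s, hs, rfl⟩ := ha
        obtain ⟨h1, h2, _⟩ := hkey s hs
        have := s.isLt
        simp only [Finset.mem_range]; omega
      · rw [Finset.card_image_of_injOn, hcard]
        intro s hs t ht hst
        obtain ⟨h1, _, _⟩ := hkey s hs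
        obtain ⟨h1', _, _⟩ := hkey t ht
        exact Fin.ext (by simp only at hst; omega)
      · intro a ha hcon
        simp only [Finset.mem_image] at ha hcon
        obtain ⟨s, hs, hsa⟩ := ha
        obtain ⟨t, ht, hta⟩ := hcon
        obtain ⟨h1, _, h3⟩ := hkey s hs
        obtain ⟨h1', _, _⟩ := hkey t ht
        exact h3 t ht (by omega)
    · intro S₁ h₁ S₂ h₂ heq
      simp only [Finset.mem_coe, Finset.mem_filter, Finset.mem_univ, true_and] at h₁ h₂
      dsimp only at heq
      have k₁ := key S₁ h₁.2
      have k₂ := key S₂ h₂.2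
      ext s
      constructor
      · intro hs
        have : s.val - 1 ∈ S₂.image (fun s => s.val - 1) := by
          rw [← heq]; exact Finset.mem_image_of_mem _ hs
        simp only [Finset.mem_image] at this
        obtain ⟨t, ht, hts⟩ := this
        obtain ⟨h1, _, _⟩ := k₁ s hs
        obtain ⟨h1', _, _⟩ := k₂ t ht
        have : t = s := Fin.ext (by omega)
        exact this ▸ ht
      · intro hs
        have : s.val - 1 ∈ S₁.image (fun s => s.val - 1) := by
          rw [heq]; exact Finset.mem_image_of_mem _ hs
        simp only [Finset.mem_image] at this
        obtain ⟨t, ht, hts⟩ := this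
        obtain ⟨h1, _, _⟩ := k₂ s hs
        obtain ⟨h1', _, _⟩ := k₁ t ht
        have : t = s := Fin.ext (by omega)
        exact this ▸ ht
  refine le_trans hle (le_trans (count_noconsec (n-2) k) (le_of_eq ?_))
  congr 1
  omega


/-- If `G` contains a twin pair, then `z'(G;k) ≥ C(n-2,k) ≥ C(n-k-1,k)` for all
`0 ≤ k ≤ n`, and hence `G` is path-extremal. -/
theorem stmt_4 {V : Type*} [Fintype V] (G : SimpleGraph V) (u v : V)
    (h : TwinPair G u v) :
    (∀ k ≤ Fintype.card V,
      Nat.choose (Fintype.card V - 2) k ≤ nfCount G k ∧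
      Nat.choose (Fintype.card V - k - 1) k ≤ nfCount G k) ∧
    PathExtremal G := by
  classical
  have hne : u ≠ v := by
    rcases h with ⟨hadj, _⟩ | ⟨hne', _, _⟩
    · exact hadj.ne
    · exact hne'
  set n := Fintype.card V with hndef
  have hn2 : 2 ≤ n := by
    have : 1 < Fintype.card V := Fintype.one_lt_card_iff.mpr ⟨u, v, hne⟩
    omega
  have part1a : ∀ k, Nat.choose (n - 2) k ≤ nfCount G k := by
    intro k
    rw [nfCount_eq]
    have hvmem : v ∈ Finset.univ.erase u := Finset.mem_erase.mpr ⟨hne.symm, Finset.mem_univ v⟩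
    have hU : ((Finset.univ.erase u).erase v).card = n - 2 := by
      rw [Finset.card_erase_of_mem hvmem, Finset.card_erase_of_mem (Finset.mem_univ u),
        Finset.card_univ]
      omega
    calc Nat.choose (n - 2) k
        = (((Finset.univ.erase u).erase v).powersetCard k).card := by
          rw [Finset.card_powersetCard, hU]
      _ ≤ _ := by
          apply Finset.card_le_card
          intro S hS
          rw [Finset.mem_powersetCard] at hS
          obtain ⟨hsub, hcard⟩ := hS
          rw [Finset.mem_filter]
          refine ⟨Finset.mem_univ S, hcard, ?_⟩
          intro hforce
          have hu : u ∉ (↑S : Set V) := by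
            intro hmem
            have := hsub hmem
            rw [Finset.mem_erase, Finset.mem_erase] at this
            exact this.2.1 rfl
          have hv : v ∉ (↑S : Set V) := by
            intro hmem
            have := hsub hmem
            rw [Finset.mem_erase] at this
            exact this.1 rfl
          exact (twin_closed G u v h ↑S hu hv u (hforce u)).1 rfl
  have part1b : ∀ k, Nat.choose (n - k - 1) k ≤ Nat.choose (n - 2) k := by
    intro k
    rcases k with _ | k
    · simp
    · exact Nat.choose_le_choose _ (by omega)
  refine ⟨fun k _ => ⟨part1a k, le_trans (part1b k) (part1a k)⟩, ?_⟩
  intro k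
  show zfCount G k ≤ zfCount (SimpleGraph.pathGraph n) k
  have hsumG := sum_counts G k
  have hsumP := sum_counts (SimpleGraph.pathGraph n) k
  rw [Fintype.card_fin] at hsumP
  have hP := path_nf_bound n k hn2
  have hG := le_trans (part1b k) (part1a k)
  rw [← hndef] at hsumG
  omega
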